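/- Let f : ℝⁿ → ℝ be twice continuously differentiable, and consider the dynamics q̇ = p, ṗ = −∇f(q) − 2dp − (∇f(q + βp) − ∇f(q)) with d > 0, β ≥ 0. Then the total energy H(q,p) = |p|²/2 + f(q) satisfies, along any trajectory, dH/dt = −2d|p|² − pᵀ (∫₀^β (d²f/dx²)(q + τp) dτ) p. In particular, if the Hessian of f satisfies uᵀ(d²f/dx²)(x) u ≥ −C_f|u|² for all u, x with C_f ≥ 0, and 0 ≤ β < 2d/C_f (or β ≥ 0 arbitrary when C_f = 0), then dH/dt ≤ −(2d − βC_f)|p|² ≤ 0. -/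

import Mathlib

open scoped RealInnerProductSpace

theorem stmt_6 (n : ℕ) (f : EuclideanSpace ℝ (Fin n) → ℝ) (hf : ContDiff ℝ 2 f)
    (d β : ℝ) (hd : 0 < d) (hβ : 0 ≤ β)
    (q p : ℝ → EuclideanSpace ℝ (Fin n))
    (hq : ∀ t, HasDerivAt q (p t) t)
    (hp : ∀ t, HasDerivAt p
      (-gradient f (q t) - (2 * d) • p t - (gradient f (q t + β • p t) - gradient f (q t))) t) :
    (∀ t, HasDerivAt (fun s => ‖p s‖ ^ 2 / 2 + f (q s))
      (-(2 * d) * ‖p t‖ ^ 2 -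
        ∫ τ in (0:ℝ)..β, ⟪p t, (fderiv ℝ (gradient f) (q t + τ • p t)) (p t)⟫) t) ∧
    (∀ C_f : ℝ, 0 ≤ C_f →
      (∀ (x u : EuclideanSpace ℝ (Fin n)), -C_f * ‖u‖ ^ 2 ≤ ⟪u, (fderiv ℝ (gradient f) x) u⟫) →
      β * C_f ≤ 2 * d →
      ∀ t, (-(2 * d) * ‖p t‖ ^ 2 -
          ∫ τ in (0:ℝ)..β, ⟪p t, (fderiv ℝ (gradient f) (q t + τ • p t)) (p t)⟫)
        ≤ -(2 * d - β * C_f) * ‖p t‖ ^ 2 ∧ -(2 * d - β * C_f) * ‖p t‖ ^ 2 ≤ 0) := by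
  have hf1 : Differentiable ℝ f := hf.differentiable (by norm_num)
  -- gradient f is C¹
  have hgradC1 : ContDiff ℝ 1 (gradient f) := by
    have : ContDiff ℝ 1 (fderiv ℝ f) := hf.fderiv_right (by norm_num)
    exact ((InnerProductSpace.toDual ℝ
      (EuclideanSpace ℝ (Fin n))).symm.contDiff).comp this
  have hgradD : Differentiable ℝ (gradient f) := hgradC1.differentiable one_ne_zero
  have hgradCont : Continuous (fderiv ℝ (gradient f)) :=
    (hgradC1.fderiv_right (m := 0) le_rfl).continuous
  -- continuity of the integrand in τ (for fixed t)
  have hcont : ∀ t, Continuous fun τ : ℝ =>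
      ⟪p t, (fderiv ℝ (gradient f) (q t + τ • p t)) (p t)⟫ := by
    intro t
    have hline : Continuous fun τ : ℝ => q t + τ • p t := by continuity
    exact (continuous_const.inner
      (((hgradCont.comp hline).clm_apply continuous_const)))
  constructor
  · intro t
    -- FTC for the integral term
    set g : ℝ → ℝ := fun τ => ⟪p t, gradient f (q t + τ • p t)⟫ with hg
    have hgderiv : ∀ τ ∈ Set.uIcc (0:ℝ) β, HasDerivAt g
        (⟪p t, (fderiv ℝ (gradient f) (q t + τ • p t)) (p t)⟫) τ := by
      intro τ _
      have hline : HasDerivAt (fun τ : ℝ => q t + τ • p t) (p t) τ := by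
        simpa using ((hasDerivAt_id τ).smul_const (p t)).const_add (q t)
      have h2 : HasDerivAt (fun τ : ℝ => gradient f (q t + τ • p t))
          ((fderiv ℝ (gradient f) (q t + τ • p t)) (p t)) τ := by
        have := (hgradD (q t + τ • p t)).hasFDerivAt.comp_hasDerivAt τ hline; exact this
      simpa [hg] using (hasDerivAt_const τ (p t)).inner ℝ h2
    have hint : (∫ τ in (0:ℝ)..β,
        ⟪p t, (fderiv ℝ (gradient f) (q t + τ • p t)) (p t)⟫) = g β - g 0 :=
      intervalIntegral.integral_eq_sub_of_hasDerivAt hgderiv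
        ((hcont t).intervalIntegrable _ _)
    -- derivative of kinetic part
    set p' := -gradient f (q t) - (2 * d) • p t -
      (gradient f (q t + β • p t) - gradient f (q t)) with hp'
    have hkin : HasDerivAt (fun s => ‖p s‖ ^ 2 / 2) ⟪p t, p'⟫ t := by
      have := ((hp t).inner ℝ (hp t)).div_const 2
      have heq : (fun s => ⟪p s, p s⟫ / 2) = fun s => ‖p s‖ ^ 2 / 2 := by
        funext s; rw [real_inner_self_eq_norm_sq]
      rw [heq] at this
      have : (⟪p t, p'⟫ + ⟪p', p t⟫) / 2 = ⟪p t, p'⟫ := by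
        rw [real_inner_comm (p t) p']; ring
      rwa [← this]
    -- derivative of potential part
    have hpot : HasDerivAt (fun s => f (q s)) ⟪gradient f (q t), p t⟫ t := by
      have := ((hf1 (q t)).hasGradientAt).hasFDerivAt.comp_hasDerivAt t (hq t)
      simp [InnerProductSpace.toDual] at this ⊢; exact this
    have : HasDerivAt (fun s => ‖p s‖ ^ 2 / 2 + f (q s)) (⟪p t, p'⟫ + ⟪gradient f (q t), p t⟫) t :=
      hkin.add hpot
    convert this using 1
    rw [hint]
    simp only [hg, hp', inner_sub_right, inner_neg_right, inner_smul_right,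
      real_inner_self_eq_norm_sq, zero_smul, add_zero,
      real_inner_comm (p t) (gradient f (q t))]
    ring
  · intro C_f hC hhess hβd t
    have hI : β * (-C_f * ‖p t‖ ^ 2) ≤
        ∫ τ in (0:ℝ)..β, ⟪p t, (fderiv ℝ (gradient f) (q t + τ • p t)) (p t)⟫ := by
      have := intervalIntegral.integral_mono_on (f := fun _ : ℝ => -C_f * ‖p t‖ ^ 2)
        (g := fun τ => ⟪p t, (fderiv ℝ (gradient f) (q t + τ • p t)) (p t)⟫) hβ
        (intervalIntegrable_const (μ := MeasureTheory.volume)) ((hcont t).intervalIntegrable _ _)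
        (fun τ _ => hhess _ _)
      simpa [smul_eq_mul, mul_comm, mul_left_comm] using this
    have hnn : (0:ℝ) ≤ ‖p t‖ ^ 2 := by positivity
    constructor
    · nlinarith [hI]
    · nlinarith
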